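/- 1/2-MMS allocations always exist: for every instance with n agents and additive valuations there exists an allocation A such that v_i(A_i) ≥ (1/2) · μ_i^n(M) for every agent i, where μ_i^n(M) is agent i's maximin share. -/

import Mathlib

open Finset

/-- The maximin share `μ^k(S)` of an agent with additive valuation `v`: the maximum over
all partitions of `S` into `k` pairwise disjoint bundles of the minimum bundle value. -/
noncomputable def maximinShare {G : Type*} [DecidableEq G] (v : G → ℝ) (k : ℕ)
    (S : Finset G) : ℝ :=
  sSup {x : ℝ | ∃ B : Fin k → Finset G,
    (∀ i j, i ≠ j → Disjoint (B i) (B j)) ∧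
    Finset.univ.biUnion B = S ∧
    x = ⨅ j : Fin k, ∑ g ∈ B j, v g}

section Helpers

variable {G : Type*} [DecidableEq G]

/-- The set of achievable minimum-bundle values. -/
def mmsSet (v : G → ℝ) (k : ℕ) (S : Finset G) : Set ℝ :=
  {x : ℝ | ∃ B : Fin k → Finset G,
    (∀ i j, i ≠ j → Disjoint (B i) (B j)) ∧
    Finset.univ.biUnion B = S ∧
    x = ⨅ j : Fin k, ∑ g ∈ B j, v g}

lemma maximinShare_eq_sSup (v : G → ℝ) (k : ℕ) (S : Finset G) :
    maximinShare v k S = sSup (mmsSet v k S) := rfl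

lemma mmsSet_finite (v : G → ℝ) (k : ℕ) (S : Finset G) : (mmsSet v k S).Finite := by
  have hsub : mmsSet v k S ⊆
      (fun B : Fin k → Finset G => ⨅ j, ∑ g ∈ B j, v g) ''
        (Set.univ.pi fun _ : Fin k => {T : Finset G | T ⊆ S}) := by
    rintro x ⟨B, hd, hu, rfl⟩
    refine ⟨B, fun j _ => ?_, rfl⟩
    intro a ha
    rw [← hu]
    exact Finset.mem_biUnion.mpr ⟨j, Finset.mem_univ j, ha⟩
  refine Set.Finite.subset (Set.Finite.image _ (Set.Finite.pi fun _ => ?_)) hsub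
  have : {T : Finset G | T ⊆ S} = ↑S.powerset := by
    ext T; simp [Finset.mem_powerset]
  rw [this]; exact S.powerset.finite_toSet

lemma mmsSet_nonempty (v : G → ℝ) {k : ℕ} (hk : 0 < k) (S : Finset G) :
    (mmsSet v k S).Nonempty := by
  haveI : NeZero k := ⟨hk.ne'⟩
  refine ⟨_, fun j : Fin k => if j = 0 then S else ∅, ?_, ?_, rfl⟩
  · intro i j hij
    by_cases hi : i = 0
    · have hj : j ≠ 0 := by rintro rfl; exact hij hi
      simp [hi, hj]
    · simp [hi]
  · ext x
    simp only [Finset.mem_biUnion, Finset.mem_univ, true_and]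
    constructor
    · rintro ⟨j, hj⟩
      by_cases h : j = 0
      · simpa [h] using hj
      · simp [h] at hj
    · intro hx; exact ⟨0, by simpa using hx⟩

lemma mms_mem (v : G → ℝ) {k : ℕ} (hk : 0 < k) (S : Finset G) :
    maximinShare v k S ∈ mmsSet v k S :=
  Set.Nonempty.csSup_mem (mmsSet_nonempty v hk S) (mmsSet_finite v k S)

lemma le_mms {v : G → ℝ} {k : ℕ} {S : Finset G} {x : ℝ} (hx : x ∈ mmsSet v k S) :
    x ≤ maximinShare v k S :=
  le_csSup (Set.Finite.bddAbove (mmsSet_finite v k S)) hx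

lemma mms_nonneg (v : G → ℝ) (hv : ∀ g, 0 ≤ v g) {k : ℕ} (hk : 0 < k) (S : Finset G) :
    0 ≤ maximinShare v k S := by
  obtain ⟨B, hd, hu, hx⟩ := mms_mem v hk S
  haveI : Nonempty (Fin k) := ⟨⟨0, hk⟩⟩
  rw [hx]
  exact le_ciInf fun j => Finset.sum_nonneg fun g _ => hv g

lemma mms_exists_partition (v : G → ℝ) {k : ℕ} (hk : 0 < k) (S : Finset G) :
    ∃ B : Fin k → Finset G,
      (∀ i j, i ≠ j → Disjoint (B i) (B j)) ∧
      Finset.univ.biUnion B = S ∧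
      ∀ j, maximinShare v k S ≤ ∑ g ∈ B j, v g := by
  obtain ⟨B, hd, hu, hx⟩ := mms_mem v hk S
  refine ⟨B, hd, hu, fun j => ?_⟩
  rw [hx]
  exact ciInf_le (Set.Finite.bddBelow (Set.finite_range _)) j

lemma card_mul_mms_le (v : G → ℝ) {k : ℕ} (hk : 0 < k) (S : Finset G) :
    (k : ℝ) * maximinShare v k S ≤ ∑ g ∈ S, v g := by
  obtain ⟨B, hd, hu, hB⟩ := mms_exists_partition v hk S
  have hsum : ∑ j : Fin k, ∑ g ∈ B j, v g = ∑ g ∈ S, v g := by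
    rw [← hu]
    exact (Finset.sum_biUnion (fun a _ b _ hab => hd a b hab)).symm
  calc (k : ℝ) * maximinShare v k S = ∑ _j : Fin k, maximinShare v k S := by
        simp [Finset.sum_const, Finset.card_univ, nsmul_eq_mul]
    _ ≤ ∑ j : Fin k, ∑ g ∈ B j, v g := Finset.sum_le_sum fun j _ => hB j
    _ = ∑ g ∈ S, v g := hsum

/-- Removing one agent and one good does not decrease the maximin share. -/
lemma mms_le_erase (v : G → ℝ) (hv : ∀ g, 0 ≤ v g) {n : ℕ} (hn : 0 < n)
    {S : Finset G} {g : G} (hg : g ∈ S) :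
    maximinShare v (n + 1) S ≤ maximinShare v n (S.erase g) := by
  obtain ⟨B, hd, hu, hB⟩ := mms_exists_partition v (Nat.succ_pos n) S
  obtain ⟨j0, _, hgj0⟩ := Finset.mem_biUnion.mp (hu ▸ hg)
  have h2 : (1 : ℕ) < n + 1 := by omega
  -- pick j1 ≠ j0
  obtain ⟨j1, hj1⟩ : ∃ j1 : Fin (n+1), j1 ≠ j0 := by
    by_cases h : j0 = ⟨0, Nat.succ_pos n⟩
    · exact ⟨⟨1, h2⟩, by simp [h, Fin.ext_iff]⟩
    · exact ⟨⟨0, Nat.succ_pos n⟩, fun hc => h hc.symm⟩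
  set B' : Fin n → Finset G := fun i =>
    if j0.succAbove i = j1 then (B j1) ∪ (B j0).erase g else B (j0.succAbove i) with hB'def
  have hgnot : ∀ t, t ≠ j0 → g ∉ B t := fun t ht hgt =>
    (Finset.disjoint_left.mp (hd t j0 ht) hgt) hgj0
  have hdisj' : ∀ a b, a ≠ b → Disjoint (B' a) (B' b) := by
    intro a b hab
    have hne : j0.succAbove a ≠ j0.succAbove b := fun h => hab (Fin.succAbove_right_injective h)
    have hna : j0.succAbove a ≠ j0 := Fin.succAbove_ne j0 a
    have hnb : j0.succAbove b ≠ j0 := Fin.succAbove_ne j0 b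
    simp only [hB'def]
    by_cases ha : j0.succAbove a = j1 <;> by_cases hb : j0.succAbove b = j1
    · exact absurd (ha.trans hb.symm) hne
    · simp only [ha, hb, if_true, if_false]
      refine Finset.disjoint_union_left.mpr ⟨hd j1 _ fun h => hb h.symm, ?_⟩
      · exact Disjoint.mono_left (Finset.erase_subset g (B j0)) (hd j0 _ fun h => hnb h.symm)
    · simp only [ha, hb, if_true, if_false]
      refine Finset.disjoint_union_right.mpr ⟨hd _ j1 ha, ?_⟩
      exact Disjoint.mono_right (Finset.erase_subset g (B j0)) (hd _ j0 hna)
    · simp only [ha, hb, if_false]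
      exact hd _ _ hne
  have hsubS : ∀ t, B t ⊆ S := by
    intro t a ha
    rw [← hu]; exact Finset.mem_biUnion.mpr ⟨t, Finset.mem_univ t, ha⟩
  have hunion' : Finset.univ.biUnion B' = S.erase g := by
    ext x
    simp only [Finset.mem_biUnion, Finset.mem_univ, true_and, Finset.mem_erase]
    constructor
    · rintro ⟨i, hi⟩
      simp only [hB'def] at hi
      by_cases h : j0.succAbove i = j1
      · rw [if_pos h] at hi
        rcases Finset.mem_union.mp hi with h1 | h1
        · exact ⟨fun hx => hgnot j1 hj1 (hx ▸ h1), hsubS j1 h1⟩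
        · exact ⟨Finset.ne_of_mem_erase h1, hsubS j0 (Finset.erase_subset _ _ h1)⟩
      · rw [if_neg h] at hi
        exact ⟨fun hx => hgnot _ (Fin.succAbove_ne j0 i) (hx ▸ hi), hsubS _ hi⟩
    · rintro ⟨hxg, hxS⟩
      obtain ⟨t, _, hxt⟩ := Finset.mem_biUnion.mp (hu ▸ hxS)
      by_cases ht : t = j0
      · obtain ⟨i1, hi1⟩ := Fin.exists_succAbove_eq hj1
        refine ⟨i1, ?_⟩
        simp only [hB'def, hi1, if_pos rfl]
        exact Finset.mem_union_right _ (Finset.mem_erase.mpr ⟨hxg, ht ▸ hxt⟩)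
      · obtain ⟨i, hi⟩ := Fin.exists_succAbove_eq ht
        refine ⟨i, ?_⟩
        simp only [hB'def, hi]
        by_cases h : t = j1
        · rw [if_pos h]; exact Finset.mem_union_left _ (h ▸ hxt)
        · rw [if_neg h]; exact hxt
  have hval : ∀ i, maximinShare v (n+1) S ≤ ∑ x ∈ B' i, v x := by
    intro i
    simp only [hB'def]
    by_cases h : j0.succAbove i = j1
    · rw [if_pos h]
      refine le_trans (hB j1) (Finset.sum_le_sum_of_subset_of_nonneg
        Finset.subset_union_left fun x _ _ => hv x)
    · rw [if_neg h]; exact hB _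
  haveI : Nonempty (Fin n) := ⟨⟨0, hn⟩⟩
  have hmem : (⨅ i : Fin n, ∑ x ∈ B' i, v x) ∈ mmsSet v n (S.erase g) :=
    ⟨B', hdisj', hunion', rfl⟩
  exact le_trans (le_ciInf hval) (le_mms hmem)

lemma fin_cases_succAbove {m : ℕ} (i t : Fin (m + 1)) :
    t = i ∨ ∃ j, i.succAbove j = t := by
  by_cases h : t = i
  · exact Or.inl h
  · exact Or.inr (Fin.exists_succAbove_eq h)

/-- Extend an allocation for `m` agents on `R \ S` to one for `m+1` agents on `R`,
giving `S` to agent `i`. -/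
lemma combine {m : ℕ} (i : Fin (m + 1)) (R S : Finset G) (hS : S ⊆ R)
    (A' : Fin m → Finset G)
    (hd : ∀ a b, a ≠ b → Disjoint (A' a) (A' b))
    (hu : Finset.univ.biUnion A' = R \ S) :
    ∃ A : Fin (m + 1) → Finset G,
      (∀ a b, a ≠ b → Disjoint (A a) (A b)) ∧
      Finset.univ.biUnion A = R ∧ A i = S ∧
      ∀ j : Fin m, A (i.succAbove j) = A' j := by
  classical
  set e : Fin m → Fin (m + 1) := i.succAbove with he
  have hinj : Function.Injective e := Fin.succAbove_right_injective
  have hei : ∀ j, e j ≠ i := fun j => Fin.succAbove_ne i j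
  refine ⟨fun t => if h : ∃ j, e j = t then A' h.choose else S, ?_, ?_, ?_, ?_⟩
  · intro a b hab
    dsimp only
    by_cases ha : ∃ j, e j = a <;> by_cases hb : ∃ j, e j = b
    · rw [dif_pos ha, dif_pos hb]
      refine hd _ _ fun h => hab ?_
      rw [← ha.choose_spec, ← hb.choose_spec, h]
    · rw [dif_pos ha, dif_neg hb]
      have : A' ha.choose ⊆ R \ S := by
        intro x hx
        rw [← hu]; exact Finset.mem_biUnion.mpr ⟨_, Finset.mem_univ _, hx⟩
      exact Finset.disjoint_left.mpr fun x hx hxS =>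
        (Finset.mem_sdiff.mp (this hx)).2 hxS
    · rw [dif_neg ha, dif_pos hb]
      have : A' hb.choose ⊆ R \ S := by
        intro x hx
        rw [← hu]; exact Finset.mem_biUnion.mpr ⟨_, Finset.mem_univ _, hx⟩
      exact Finset.disjoint_right.mpr fun x hx hxS =>
        (Finset.mem_sdiff.mp (this hx)).2 hxS
    · exfalso
      apply hab
      have h1 : a = i := by
        rcases fin_cases_succAbove i a with h | ⟨j, hj⟩
        · exact h
        · exact absurd ⟨j, hj⟩ ha
      have h2 : b = i := by
        rcases fin_cases_succAbove i b with h | ⟨j, hj⟩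
        · exact h
        · exact absurd ⟨j, hj⟩ hb
      rw [h1, h2]
  · ext x
    simp only [Finset.mem_biUnion, Finset.mem_univ, true_and]
    constructor
    · rintro ⟨t, ht⟩
      by_cases h : ∃ j, e j = t
      · rw [dif_pos h] at ht
        have : A' h.choose ⊆ R \ S := by
          intro y hy
          rw [← hu]; exact Finset.mem_biUnion.mpr ⟨_, Finset.mem_univ _, hy⟩
        exact (Finset.mem_sdiff.mp (this ht)).1
      · rw [dif_neg h] at ht
        exact hS ht
    · intro hx
      by_cases hxS : x ∈ S
      · refine ⟨i, ?_⟩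
        rw [dif_neg]
        · exact hxS
        · rintro ⟨j, hj⟩; exact hei j hj
      · have : x ∈ R \ S := Finset.mem_sdiff.mpr ⟨hx, hxS⟩
        rw [← hu] at this
        obtain ⟨j, _, hj⟩ := Finset.mem_biUnion.mp this
        refine ⟨e j, ?_⟩
        have hex : ∃ j', e j' = e j := ⟨j, rfl⟩
        rw [dif_pos hex]
        rwa [hinj hex.choose_spec]
  · dsimp only
    rw [dif_neg]
    rintro ⟨j, hj⟩; exact hei j hj
  · intro j
    dsimp only
    have hex : ∃ j', e j' = e j := ⟨j, rfl⟩
    rw [dif_pos hex, hinj hex.choose_spec]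

/-- Bag filling: if every good is worth less than half of each agent's target, and targets
are collectively feasible, each agent can get at least half her target. -/
lemma bagFill : ∀ (m : ℕ) (R : Finset G) (v : Fin (m + 1) → G → ℝ) (μ : Fin (m + 1) → ℝ),
    (∀ i g, 0 ≤ v i g) → (∀ i, 0 ≤ μ i) →
    (∀ i g, g ∈ R → v i g < μ i / 2) →
    (∀ i, ((m : ℝ) + 1) * μ i ≤ ∑ g ∈ R, v i g) →
    ∃ A : Fin (m + 1) → Finset G,
      (∀ a b, a ≠ b → Disjoint (A a) (A b)) ∧
      Finset.univ.biUnion A = R ∧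
      ∀ i, μ i / 2 ≤ ∑ g ∈ A i, v i g := by
  intro m
  induction m with
  | zero =>
    intro R v μ hv hμ hsmall htot
    refine ⟨fun _ => R, ?_, ?_, ?_⟩
    · intro a b hab; exact absurd (Fin.ext (by omega)) hab
    · ext x; simp
    · intro i
      have := htot i
      have h0 := hμ i
      simp only [Nat.cast_zero, zero_add, one_mul] at this
      linarith
  | succ m ih =>
    intro R v μ hv hμ hsmall htot
    classical
    set 𝒮 : Finset (Finset G) :=
      R.powerset.filter (fun T => ∃ i, μ i / 2 ≤ ∑ g ∈ T, v i g) with h𝒮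
    have hR𝒮 : R ∈ 𝒮 := by
      rw [h𝒮, Finset.mem_filter]
      refine ⟨Finset.mem_powerset_self R, ⟨0, ?_⟩⟩
      have := htot 0
      have h0 := hμ 0
      nlinarith
    obtain ⟨S, hS𝒮, hSmin⟩ := Finset.exists_min_image 𝒮 Finset.card ⟨R, hR𝒮⟩
    rw [h𝒮, Finset.mem_filter, Finset.mem_powerset] at hS𝒮
    obtain ⟨hSR, i, hi⟩ := hS𝒮
    -- every agent values S at most μ
    have hSle : ∀ j, ∑ g ∈ S, v j g ≤ μ j := by
      intro j
      rcases Finset.eq_empty_or_nonempty S with rfl | ⟨g, hg⟩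
      · simpa using hμ j
      · have hcard : (S.erase g).card < S.card := Finset.card_erase_lt_of_mem hg
        have hnot : S.erase g ∉ 𝒮 := fun h => absurd (hSmin _ h) (by omega)
        rw [h𝒮, Finset.mem_filter, Finset.mem_powerset] at hnot
        push_neg at hnot
        have hsub : S.erase g ⊆ R := (Finset.erase_subset g S).trans hSR
        have h1 : ∑ x ∈ S.erase g, v j x < μ j / 2 := hnot hsub j
        have h2 : v j g < μ j / 2 := hsmall j g (hSR hg)
        have h3 : v j g + ∑ x ∈ S.erase g, v j x = ∑ x ∈ S, v j x :=
          Finset.add_sum_erase S (v j) hg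
        linarith
    -- recurse on the remaining m+1 agents and goods R \ S
    have hrec := ih (R \ S) (fun j => v (i.succAbove j)) (fun j => μ (i.succAbove j))
      (fun j g => hv _ g) (fun j => hμ _)
      (fun j g hg => hsmall _ g (Finset.mem_sdiff.mp hg).1)
      (by
        intro j
        have h1 := htot (i.succAbove j)
        have h2 := hSle (i.succAbove j)
        have h3 : ∑ g ∈ R \ S, v (i.succAbove j) g + ∑ g ∈ S, v (i.succAbove j) g
            = ∑ g ∈ R, v (i.succAbove j) g := Finset.sum_sdiff hSR
        push_cast at h1 ⊢
        linarith)
    obtain ⟨A', hd', hu', hval'⟩ := hrec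
    obtain ⟨A, hdA, huA, hAi, hAe⟩ := combine i R S hSR A' hd' hu'
    refine ⟨A, hdA, huA, ?_⟩
    intro t
    rcases fin_cases_succAbove i t with rfl | ⟨j, rfl⟩
    · rw [hAi]; exact hi
    · rw [hAe j]; exact hval' j

/-- Main existence lemma, phrased for `n + 1` agents. -/
lemma half_mms_exists_aux : ∀ (n : ℕ) (S : Finset G) (v : Fin (n + 1) → G → ℝ),
    (∀ i g, 0 ≤ v i g) →
    ∃ A : Fin (n + 1) → Finset G,
      (∀ i j, i ≠ j → Disjoint (A i) (A j)) ∧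
      Finset.univ.biUnion A = S ∧
      ∀ i, maximinShare (v i) (n + 1) S / 2 ≤ ∑ g ∈ A i, v i g := by
  intro n
  induction n with
  | zero =>
    intro S v hv
    refine ⟨fun _ => S, ?_, ?_, ?_⟩
    · intro a b hab; exact absurd (Fin.ext (by omega)) hab
    · ext x; simp
    · intro i
      have h1 := card_mul_mms_le (v i) Nat.one_pos S
      have h0 := mms_nonneg (v i) (hv i) Nat.one_pos S
      simp only [Nat.cast_one, one_mul] at h1
      linarith
  | succ n ih =>
    intro S v hv
    classical
    by_cases hcase : ∃ i g, g ∈ S ∧ maximinShare (v i) (n + 2) S / 2 ≤ v i g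
    · -- Case 1: some agent values some single good highly
      obtain ⟨i, g, hgS, hig⟩ := hcase
      obtain ⟨A', hd', hu', hval'⟩ := ih (S.erase g) (fun j => v (i.succAbove j))
        (fun j => hv _)
      rw [Finset.erase_eq] at hu'
      obtain ⟨A, hdA, huA, hAi, hAe⟩ := combine i S {g}
        (Finset.singleton_subset_iff.mpr hgS) A' hd' hu'
      refine ⟨A, hdA, huA, ?_⟩
      intro t
      rcases fin_cases_succAbove i t with rfl | ⟨j, rfl⟩
      · rw [hAi, Finset.sum_singleton]; exact hig
      · rw [hAe j]
        refine le_trans ?_ (hval' j)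
        have := mms_le_erase (v (i.succAbove j)) (hv _) (Nat.succ_pos n) hgS
        linarith
    · -- Case 2: all goods are small; bag filling
      push_neg at hcase
      have hbag := bagFill (n + 1) S v (fun i => maximinShare (v i) (n + 2) S)
        hv (fun i => mms_nonneg (v i) (hv i) (by omega) S)
        (fun i g hg => hcase i g hg)
        (by
          intro i
          have := card_mul_mms_le (v i) (show 0 < n + 2 by omega) S
          push_cast at this ⊢
          linarith)
      obtain ⟨A, hdA, huA, hval⟩ := hbag
      exact ⟨A, hdA, huA, hval⟩

end Helpers

/-- 1/2-MMS allocations always exist: for every instance with `n > 0` agents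
and additive valuations there exists an allocation giving every agent at least half of her
maximin share. -/
theorem half_mms_exists {n : ℕ} (hn : 0 < n) {G : Type*} [DecidableEq G]
    (M : Finset G) (v : Fin n → G → ℝ) (hv : ∀ i g, 0 ≤ v i g) :
    ∃ A : Fin n → Finset G,
      (∀ i j, i ≠ j → Disjoint (A i) (A j)) ∧
      Finset.univ.biUnion A = M ∧
      ∀ i : Fin n, (1 / 2) * maximinShare (v i) n M ≤ ∑ g ∈ A i, v i g := by
  obtain ⟨m, rfl⟩ : ∃ m, n = m + 1 := ⟨n - 1, by omega⟩
  obtain ⟨A, h1, h2, h3⟩ := half_mms_exists_aux m M v hv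
  refine ⟨A, h1, h2, fun i => ?_⟩
  have := h3 i
  linarith
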